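/- For every instance of the model (finite U, V, E = U × V, integer bounds π_low ≤ π̄ and strictly increasing valuation functions f_{ij}, f_{ji} : ℤ → ℝ for each (i,j) ∈ E), there exists a pairwise-stable outcome: a matching X ⊆ E and a feasible integer price vector p (π_low ≤ p ≤ π̄ on X) together with payoffs q, r defined by q_i = f_{ij}(p_{ij}) for (i,j) ∈ X (0 if i unmatched) and r_j = f_{ji}(-p_{ij}) for (i,j) ∈ X (0 if j unmatched), such that q ≥ 0, r ≥ 0, and for every (i,j) ∈ E and every integer c ∈ [π_low_{ij}, π̄_{ij}], f_{ij}(c) ≤ q_i or f_{ji}(-c) ≤ r_j. -/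

import Mathlib

namespace Stmt12Aux

open Finset
attribute [local instance] Classical.propDecidable

noncomputable section

/-- generic argmax over a nonempty finset -/
def amax {α K : Type*} [LinearOrder K] (S : Finset α) (h : S.Nonempty) (k : α → K) : α :=
  (S.exists_max_image k h).choose

lemma amax_mem {α K : Type*} [LinearOrder K] (S : Finset α) (h : S.Nonempty) (k : α → K) :
    amax S h k ∈ S := (S.exists_max_image k h).choose_spec.1

lemma amax_spec {α K : Type*} [LinearOrder K] (S : Finset α) (h : S.Nonempty) (k : α → K) :
    ∀ b ∈ S, k b ≤ k (amax S h k) := (S.exists_max_image k h).choose_spec.2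

/-- fixed point of a monotone map on a finite "ordered" type, starting from a least element -/
lemma exists_fixed {A : Type*} [Finite A] (T : A → A) (le : A → A → Prop)
    (hrefl : ∀ a, le a a) (htrans : ∀ {a b c}, le a b → le b c → le a c)
    (hanti : ∀ {a b}, le a b → le b a → a = b)
    (hmono : ∀ {a b}, le a b → le (T a) (T b))
    (a0 : A) (h0 : le a0 (T a0)) : ∃ x, T x = x := by
  have step : ∀ n : ℕ, le (T^[n] a0) (T^[n + 1] a0) := by
    intro n
    induction n with
    | zero => simpa using h0
    | succ n ih =>
      rw [Function.iterate_succ_apply', Function.iterate_succ_apply']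
      exact hmono ih
  have mono : ∀ m n : ℕ, m ≤ n → le (T^[m] a0) (T^[n] a0) := by
    intro m n hmn
    induction n with
    | zero => simp_all [Nat.le_zero.mp hmn, hrefl]
    | succ n ih =>
      rcases eq_or_lt_of_le hmn with h | h
      · exact h ▸ hrefl _
      · exact htrans (ih (Nat.lt_succ_iff.mp h)) (step n)
  obtain ⟨m, n, hne, heq⟩ := Finite.exists_ne_map_eq_of_infinite (fun n => T^[n] a0)
  rcases hne.lt_or_gt with h | h
  · refine ⟨T^[m] a0, ?_⟩
    have h1 : le (T^[m] a0) (T^[m + 1] a0) := step m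
    have h2 : le (T^[m + 1] a0) (T^[n] a0) := mono _ _ h
    have : T^[m + 1] a0 = T^[m] a0 := hanti (heq ▸ h2) h1
    rw [← Function.iterate_succ_apply' T m a0, this]
  · refine ⟨T^[n] a0, ?_⟩
    have h1 : le (T^[n] a0) (T^[n + 1] a0) := step n
    have h2 : le (T^[n + 1] a0) (T^[m] a0) := mono _ _ h
    have : T^[n + 1] a0 = T^[n] a0 := hanti (heq ▸ h2) h1
    rw [← Function.iterate_succ_apply' T n a0, this]

variable {U V : Type*} [Fintype U] [Fintype V]

/-- feasible contracts for seller `m` : pairs (buyer, price) -/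
def CsF (πlow πup : U → V → ℤ) (m : U) : Finset (V × ℤ) :=
  Finset.univ.biUnion fun j => (Finset.Icc (πlow m j) (πup m j)).map
    ⟨fun c => (j, c), fun a b h => (Prod.ext_iff.mp h).2⟩

lemma mem_CsF (πlow πup : U → V → ℤ) (m : U) (j : V) (c : ℤ) :
    (j, c) ∈ CsF πlow πup m ↔ πlow m j ≤ c ∧ c ≤ πup m j := by
  simp only [CsF, Finset.mem_biUnion, Finset.mem_map, Finset.mem_Icc, Function.Embedding.coeFn_mk,
    Finset.mem_univ, true_and]
  constructor
  · rintro ⟨j', c', hc', h⟩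
    obtain ⟨rfl, rfl⟩ := Prod.ext_iff.mp h.symm
    exact hc'
  · exact fun h => ⟨j, c, h, rfl⟩

/-- feasible contracts for buyer `w` : pairs (seller, price) -/
def CbF (πlow πup : U → V → ℤ) (w : V) : Finset (U × ℤ) :=
  Finset.univ.biUnion fun i => (Finset.Icc (πlow i w) (πup i w)).map
    ⟨fun c => (i, c), fun a b h => (Prod.ext_iff.mp h).2⟩

lemma mem_CbF (πlow πup : U → V → ℤ) (w : V) (i : U) (c : ℤ) :
    (i, c) ∈ CbF πlow πup w ↔ πlow i w ≤ c ∧ c ≤ πup i w := by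
  simp only [CbF, Finset.mem_biUnion, Finset.mem_map, Finset.mem_Icc, Function.Embedding.coeFn_mk,
    Finset.mem_univ, true_and]
  constructor
  · rintro ⟨i', c', hc', h⟩
    obtain ⟨rfl, rfl⟩ := Prod.ext_iff.mp h.symm
    exact hc'
  · exact fun h => ⟨i, c, h, rfl⟩

variable [LinearOrder U] [LinearOrder V]

abbrev Om (πlow πup : U → V → ℤ) (m : U) := Option {x : V × ℤ // x ∈ CsF πlow πup m}
abbrev Ow (πlow πup : U → V → ℤ) (w : V) := Option {x : U × ℤ // x ∈ CbF πlow πup w}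

variable (fS fB : U → V → ℤ → ℝ) (πlow πup : U → V → ℤ)

/-- seller key for a contract of seller m with buyer j at price c -/
def skc (m : U) (j : V) (c : ℤ) : ℝ ×ₗ WithBot (V ×ₗ ℤ) :=
  toLex (fS m j c, ((toLex (j, c) : V ×ₗ ℤ) : WithBot (V ×ₗ ℤ)))

def bkc (w : V) (i : U) (c : ℤ) : ℝ ×ₗ WithBot (U ×ₗ ℤ) :=
  toLex (fB i w (-c), ((toLex (i, c) : U ×ₗ ℤ) : WithBot (U ×ₗ ℤ)))

def sKey (m : U) : Om πlow πup m → ℝ ×ₗ WithBot (V ×ₗ ℤ)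
  | none => toLex (0, ⊥)
  | some z => skc fS m z.1.1 z.1.2

def bKey (w : V) : Ow πlow πup w → ℝ ×ₗ WithBot (U ×ₗ ℤ)
  | none => toLex (0, ⊥)
  | some z => bkc fB w z.1.1 z.1.2

lemma sKey_inj (m : U) : Function.Injective (sKey fS πlow πup m) := by
  rintro (_ | a) (_ | b) h
  · rfl
  · exact absurd (congrArg (fun x : ℝ ×ₗ WithBot (V ×ₗ ℤ) => (ofLex x).2) h) (by simp [sKey, skc])
  · exact absurd (congrArg (fun x : ℝ ×ₗ WithBot (V ×ₗ ℤ) => (ofLex x).2) h) (by simp [sKey, skc])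
  · have h2 := congrArg (fun x : ℝ ×ₗ WithBot (V ×ₗ ℤ) => (ofLex x).2) h
    simp only [sKey, skc, ofLex_toLex] at h2
    have h3 : (toLex ((a : V × ℤ).1, (a : V × ℤ).2) : V ×ₗ ℤ) = toLex ((b : V × ℤ).1, (b : V × ℤ).2) := by
      exact_mod_cast h2
    have h4 := toLex.injective h3
    congr 1
    exact Subtype.ext (by rw [← Prod.mk.eta (p := (a : V × ℤ)), ← Prod.mk.eta (p := (b : V × ℤ))]; exact h4)

lemma bKey_inj (w : V) : Function.Injective (bKey fB πlow πup m) := by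
  rintro (_ | a) (_ | b) h
  · rfl
  · exact absurd (congrArg (fun x : ℝ ×ₗ WithBot (U ×ₗ ℤ) => (ofLex x).2) h) (by simp [bKey, bkc])
  · exact absurd (congrArg (fun x : ℝ ×ₗ WithBot (U ×ₗ ℤ) => (ofLex x).2) h) (by simp [bKey, bkc])
  · have h2 := congrArg (fun x : ℝ ×ₗ WithBot (U ×ₗ ℤ) => (ofLex x).2) h
    simp only [bKey, bkc, ofLex_toLex] at h2
    have h3 : (toLex ((a : U × ℤ).1, (a : U × ℤ).2) : U ×ₗ ℤ) = toLex ((b : U × ℤ).1, (b : U × ℤ).2) := by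
      exact_mod_cast h2
    have h4 := toLex.injective h3
    congr 1
    exact Subtype.ext (by rw [← Prod.mk.eta (p := (a : U × ℤ)), ← Prod.mk.eta (p := (b : U × ℤ))]; exact h4)


/-- seller `m` finds option `z` eligible given buyers' holdings `ν` -/
def sElig (ν : ∀ w, Ow πlow πup w) (m : U) (z : Om πlow πup m) : Prop :=
  ∀ (x : V × ℤ) (h : x ∈ CsF πlow πup m), z = some ⟨x, h⟩ →
    bKey fB πlow πup x.1 (ν x.1) ≤ bkc fB x.1 m x.2

def bElig (μ : ∀ m, Om πlow πup m) (w : V) (z : Ow πlow πup w) : Prop :=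
  ∀ (x : U × ℤ) (h : x ∈ CbF πlow πup w), z = some ⟨x, h⟩ →
    sKey fS πlow πup x.1 (μ x.1) ≤ skc fS x.1 w x.2

lemma sElig_none (ν : ∀ w, Ow πlow πup w) (m : U) : sElig fB πlow πup ν m none :=
  fun _ _ h => by cases h

lemma bElig_none (μ : ∀ m, Om πlow πup m) (w : V) : bElig fS πlow πup μ w none :=
  fun _ _ h => by cases h

abbrev StA := (∀ m : U, Om πlow πup m) × (∀ w : V, Ow πlow πup w)

/-- the Adachi-style monotone map -/
def Tmap (s : StA πlow πup) : StA πlow πup :=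
  (fun m => amax (Finset.univ.filter (sElig fB πlow πup s.2 m))
      ⟨none, Finset.mem_filter.mpr ⟨Finset.mem_univ _, sElig_none fB πlow πup s.2 m⟩⟩
      (sKey fS πlow πup m),
   fun w => amax (Finset.univ.filter (bElig fS πlow πup s.1 w))
      ⟨none, Finset.mem_filter.mpr ⟨Finset.mem_univ _, bElig_none fS πlow πup s.1 w⟩⟩
      (bKey fB πlow πup w))

/-- the order on states: sellers improve, buyers get worse -/
def stLe (s t : StA πlow πup) : Prop :=
  (∀ m, sKey fS πlow πup m (s.1 m) ≤ sKey fS πlow πup m (t.1 m)) ∧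
  (∀ w, bKey fB πlow πup w (t.2 w) ≤ bKey fB πlow πup w (s.2 w))

lemma stLe_refl (s : StA πlow πup) : stLe fS fB πlow πup s s := ⟨fun _ => le_rfl, fun _ => le_rfl⟩

lemma stLe_trans {s t u : StA πlow πup} (h1 : stLe fS fB πlow πup s t)
    (h2 : stLe fS fB πlow πup t u) : stLe fS fB πlow πup s u :=
  ⟨fun m => (h1.1 m).trans (h2.1 m), fun w => (h2.2 w).trans (h1.2 w)⟩

lemma stLe_antisymm {s t : StA πlow πup} (h1 : stLe fS fB πlow πup s t)
    (h2 : stLe fS fB πlow πup t s) : s = t := by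
  refine Prod.ext (funext fun m => ?_) (funext fun w => ?_)
  · exact sKey_inj fS πlow πup m (le_antisymm (h1.1 m) (h2.1 m))
  · exact bKey_inj fB πlow πup w (le_antisymm (h2.2 w) (h1.2 w))

lemma amax_le_amax {α K : Type*} [LinearOrder K] {S S' : Finset α} (hSS : S ⊆ S')
    (h : S.Nonempty) (h' : S'.Nonempty) (k : α → K) :
    k (amax S h k) ≤ k (amax S' h' k) :=
  amax_spec S' h' k _ (hSS (amax_mem S h k))

lemma Tmap_mono {s t : StA πlow πup} (h : stLe fS fB πlow πup s t) :
    stLe fS fB πlow πup (Tmap fS fB πlow πup s) (Tmap fS fB πlow πup t) := by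
  constructor
  · intro m
    have hsub : (Finset.univ.filter (sElig fB πlow πup s.2 m)) ⊆
        (Finset.univ.filter (sElig fB πlow πup t.2 m)) := by
      intro z hz
      rw [Finset.mem_filter] at hz ⊢
      exact ⟨hz.1, fun x hx hzx => le_trans (h.2 x.1) (hz.2 x hx hzx)⟩
    exact amax_le_amax hsub
      ⟨none, Finset.mem_filter.mpr ⟨Finset.mem_univ _, sElig_none fB πlow πup s.2 m⟩⟩
      ⟨none, Finset.mem_filter.mpr ⟨Finset.mem_univ _, sElig_none fB πlow πup t.2 m⟩⟩ _
  · intro w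
    have hsub : (Finset.univ.filter (bElig fS πlow πup t.1 w)) ⊆
        (Finset.univ.filter (bElig fS πlow πup s.1 w)) := by
      intro z hz
      rw [Finset.mem_filter] at hz ⊢
      exact ⟨hz.1, fun x hx hzx => le_trans (h.1 x.1) (hz.2 x hx hzx)⟩
    exact amax_le_amax hsub
      ⟨none, Finset.mem_filter.mpr ⟨Finset.mem_univ _, bElig_none fS πlow πup t.1 w⟩⟩
      ⟨none, Finset.mem_filter.mpr ⟨Finset.mem_univ _, bElig_none fS πlow πup s.1 w⟩⟩ _

/-- the least state: sellers at their worst option, buyers at their best -/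
def stBot : StA πlow πup :=
  (fun m => amax Finset.univ ⟨none, Finset.mem_univ _⟩
      (fun z => OrderDual.toDual (sKey fS πlow πup m z)),
   fun w => amax Finset.univ ⟨none, Finset.mem_univ _⟩ (bKey fB πlow πup w))

lemma stBot_le (s : StA πlow πup) : stLe fS fB πlow πup (stBot fS fB πlow πup) s := by
  constructor
  · intro m
    exact amax_spec Finset.univ ⟨none, Finset.mem_univ _⟩
      (fun z => OrderDual.toDual (sKey fS πlow πup m z)) (s.1 m) (Finset.mem_univ _)
  · intro w
    exact amax_spec Finset.univ ⟨none, Finset.mem_univ _⟩ (bKey fB πlow πup w) (s.2 w)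
      (Finset.mem_univ _)

lemma exists_fixed_Tmap : ∃ x : StA πlow πup, Tmap fS fB πlow πup x = x :=
  exists_fixed (Tmap fS fB πlow πup) (stLe fS fB πlow πup) (stLe_refl fS fB πlow πup)
    (fun h1 h2 => stLe_trans fS fB πlow πup h1 h2)
    (fun h1 h2 => stLe_antisymm fS fB πlow πup h1 h2)
    (fun h => Tmap_mono fS fB πlow πup h)
    (stBot fS fB πlow πup) (stBot_le fS fB πlow πup _)


lemma lex_fst_le {α β : Type*} [PartialOrder α] [Preorder β] {x y : α ×ₗ β} (h : x ≤ y) :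
    (ofLex x).1 ≤ (ofLex y).1 := by
  rcases Prod.Lex.le_iff.mp h with h | h
  · exact le_of_lt h
  · exact le_of_eq h.1

lemma lex_le_of_fst_lt {α β : Type*} [PartialOrder α] [Preorder β] {x : α ×ₗ β} {b : α × β}
    (h : (ofLex x).1 < b.1) : x ≤ toLex b :=
  Prod.Lex.le_iff.mpr (Or.inl h)

theorem main {U V : Type*} [Fintype U] [Fintype V] [LinearOrder U] [LinearOrder V]
    (fS fB : U → V → ℤ → ℝ)
    (πlow πup : U → V → ℤ) :
    ∃ (X : Finset (U × V)) (p : U → V → ℤ) (q : U → ℝ) (r : V → ℝ),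
      (∀ i j j', (i, j) ∈ X → (i, j') ∈ X → j = j') ∧
      (∀ i i' j, (i, j) ∈ X → (i', j) ∈ X → i = i') ∧
      (∀ i j, (i, j) ∈ X → πlow i j ≤ p i j ∧ p i j ≤ πup i j) ∧
      (∀ i j, (i, j) ∈ X → q i = fS i j (p i j)) ∧
      (∀ i, (∀ j, (i, j) ∉ X) → q i = 0) ∧
      (∀ i j, (i, j) ∈ X → r j = fB i j (-(p i j))) ∧
      (∀ j, (∀ i, (i, j) ∉ X) → r j = 0) ∧
      (∀ i, 0 ≤ q i) ∧ (∀ j, 0 ≤ r j) ∧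
      (∀ i j, ∀ c : ℤ, πlow i j ≤ c → c ≤ πup i j →
        fS i j c ≤ q i ∨ fB i j (-c) ≤ r j) := by
  obtain ⟨⟨μ, ν⟩, hx⟩ := exists_fixed_Tmap fS fB πlow πup
  have keyμ : ∀ m, amax (Finset.univ.filter (sElig fB πlow πup ν m))
      ⟨none, Finset.mem_filter.mpr ⟨Finset.mem_univ _, sElig_none fB πlow πup ν m⟩⟩
      (sKey fS πlow πup m) = μ m := fun m => congrFun (congrArg Prod.fst hx) m
  have keyν : ∀ w, amax (Finset.univ.filter (bElig fS πlow πup μ w))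
      ⟨none, Finset.mem_filter.mpr ⟨Finset.mem_univ _, bElig_none fS πlow πup μ w⟩⟩
      (bKey fB πlow πup w) = ν w := fun w => congrFun (congrArg Prod.snd hx) w
  have haμ : ∀ m, sElig fB πlow πup ν m (μ m) := by
    intro m
    have h1 := amax_mem (Finset.univ.filter (sElig fB πlow πup ν m))
      ⟨none, Finset.mem_filter.mpr ⟨Finset.mem_univ _, sElig_none fB πlow πup ν m⟩⟩
      (sKey fS πlow πup m)
    rw [keyμ m] at h1
    exact (Finset.mem_filter.mp h1).2
  have haν : ∀ w, bElig fS πlow πup μ w (ν w) := by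
    intro w
    have h1 := amax_mem (Finset.univ.filter (bElig fS πlow πup μ w))
      ⟨none, Finset.mem_filter.mpr ⟨Finset.mem_univ _, bElig_none fS πlow πup μ w⟩⟩
      (bKey fB πlow πup w)
    rw [keyν w] at h1
    exact (Finset.mem_filter.mp h1).2
  have hbμ : ∀ m z, sElig fB πlow πup ν m z →
      sKey fS πlow πup m z ≤ sKey fS πlow πup m (μ m) := by
    intro m z hz
    have h1 := amax_spec (Finset.univ.filter (sElig fB πlow πup ν m))
      ⟨none, Finset.mem_filter.mpr ⟨Finset.mem_univ _, sElig_none fB πlow πup ν m⟩⟩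
      (sKey fS πlow πup m) z (Finset.mem_filter.mpr ⟨Finset.mem_univ _, hz⟩)
    rwa [keyμ m] at h1
  have hbν : ∀ w z, bElig fS πlow πup μ w z →
      bKey fB πlow πup w z ≤ bKey fB πlow πup w (ν w) := by
    intro w z hz
    have h1 := amax_spec (Finset.univ.filter (bElig fS πlow πup μ w))
      ⟨none, Finset.mem_filter.mpr ⟨Finset.mem_univ _, bElig_none fS πlow πup μ w⟩⟩
      (bKey fB πlow πup w) z (Finset.mem_filter.mpr ⟨Finset.mem_univ _, hz⟩)
    rwa [keyν w] at h1
  -- consistency between the two sides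
  have consMN : ∀ (m : U) (j : V) (c : ℤ) (h : (j, c) ∈ CsF πlow πup m),
      μ m = some ⟨(j, c), h⟩ →
      ν j = some ⟨(m, c), (mem_CbF πlow πup j m c).mpr ((mem_CsF πlow πup m j c).mp h)⟩ := by
    intro m j c h hm
    set h' := (mem_CbF πlow πup j m c).mpr ((mem_CsF πlow πup m j c).mp h) with hh'
    have e1 : bKey fB πlow πup j (ν j) ≤ bkc fB j m c := haμ m (j, c) h hm
    have e2 : bElig fS πlow πup μ j (some ⟨(m, c), h'⟩) := by
      intro y hy hyx
      have hy2 : y = (m, c) := by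
        have := (Option.some.injEq _ _).mp hyx.symm
        exact congrArg Subtype.val this
      subst hy2
      rw [hm]
      exact le_of_eq rfl
    have e3 : bKey fB πlow πup j (some ⟨(m, c), h'⟩) ≤ bKey fB πlow πup j (ν j) := hbν j _ e2
    have e4 : bKey fB πlow πup j (ν j) = bKey fB πlow πup j (some ⟨(m, c), h'⟩) :=
      le_antisymm e1 e3
    exact bKey_inj fB πlow πup j e4
  have consNM : ∀ (w : V) (i : U) (c : ℤ) (h : (i, c) ∈ CbF πlow πup w),
      ν w = some ⟨(i, c), h⟩ →
      μ i = some ⟨(w, c), (mem_CsF πlow πup i w c).mpr ((mem_CbF πlow πup w i c).mp h)⟩ := by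
    intro w i c h hw
    set h' := (mem_CsF πlow πup i w c).mpr ((mem_CbF πlow πup w i c).mp h) with hh'
    have e1 : sKey fS πlow πup i (μ i) ≤ skc fS i w c := haν w (i, c) h hw
    have e2 : sElig fB πlow πup ν i (some ⟨(w, c), h'⟩) := by
      intro y hy hyx
      have hy2 : y = (w, c) := by
        have := (Option.some.injEq _ _).mp hyx.symm
        exact congrArg Subtype.val this
      subst hy2
      rw [hw]
      exact le_of_eq rfl
    have e3 : sKey fS πlow πup i (some ⟨(w, c), h'⟩) ≤ sKey fS πlow πup i (μ i) := hbμ i _ e2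
    have e4 : sKey fS πlow πup i (μ i) = sKey fS πlow πup i (some ⟨(w, c), h'⟩) :=
      le_antisymm e1 e3
    exact sKey_inj fS πlow πup i e4
  -- the outcome
  refine ⟨Finset.univ.filter (fun ij : U × V => ∃ c hc, μ ij.1 = some ⟨(ij.2, c), hc⟩),
    fun i j => ((μ i).elim (πlow i j) (fun z => z.1.2)),
    fun i => ((μ i).elim 0 (fun z => fS i z.1.1 z.1.2)),
    fun w => ((ν w).elim 0 (fun z => fB z.1.1 w (-z.1.2))), ?_, ?_, ?_, ?_, ?_, ?_, ?_, ?_, ?_, ?_⟩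
  · -- seller side matching
    intro i j j' h1 h2
    obtain ⟨c, hc, hm⟩ := (Finset.mem_filter.mp h1).2
    obtain ⟨c', hc', hm'⟩ := (Finset.mem_filter.mp h2).2
    rw [hm] at hm'
    have := congrArg Subtype.val ((Option.some.injEq _ _).mp hm')
    exact (Prod.ext_iff.mp this).1
  · -- buyer side matching
    intro i i' j h1 h2
    obtain ⟨c, hc, hm⟩ := (Finset.mem_filter.mp h1).2
    obtain ⟨c', hc', hm'⟩ := (Finset.mem_filter.mp h2).2
    have e1 := consMN i j c hc hm
    have e2 := consMN i' j c' hc' hm'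
    rw [e1] at e2
    have := congrArg Subtype.val ((Option.some.injEq _ _).mp e2)
    exact (Prod.ext_iff.mp this).1
  · -- feasibility
    intro i j h1
    obtain ⟨c, hc, hm⟩ := (Finset.mem_filter.mp h1).2
    dsimp only at hm hc ⊢
    rw [hm]
    exact (mem_CsF πlow πup i j c).mp hc
  · -- q definition on X
    intro i j h1
    obtain ⟨c, hc, hm⟩ := (Finset.mem_filter.mp h1).2
    dsimp only at hm hc ⊢
    rw [hm]
    rfl
  · -- q unmatched
    intro i h1
    dsimp only
    match hm : μ i with
    | none => rfl
    | some z =>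
      exfalso
      apply h1 z.1.1
      refine Finset.mem_filter.mpr ⟨Finset.mem_univ _, z.1.2, ?_, ?_⟩
      · rw [Prod.mk.eta]; exact z.2
      · rw [hm]
  · -- r definition on X
    intro i j h1
    obtain ⟨c, hc, hm⟩ := (Finset.mem_filter.mp h1).2
    dsimp only at hm hc ⊢
    rw [consMN i j c hc hm, hm]
    rfl
  · -- r unmatched
    intro j h1
    dsimp only
    match hw : ν j with
    | none => rfl
    | some z =>
      exfalso
      apply h1 z.1.1
      have hz2 : ν j = some ⟨(z.1.1, z.1.2), by rw [Prod.mk.eta]; exact z.2⟩ := by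
        rw [hw]
      have := consNM j z.1.1 z.1.2 _ hz2
      exact Finset.mem_filter.mpr ⟨Finset.mem_univ _, z.1.2, _, this⟩
  · -- q nonneg
    intro i
    have h1 := hbμ i none (sElig_none fB πlow πup ν i)
    have h2 := lex_fst_le h1
    dsimp only
    match hm : μ i with
    | none => simp [hm]
    | some z =>
      rw [hm] at h2
      simp only [hm, Option.elim_some]
      simpa [sKey, skc] using h2
  · -- r nonneg
    intro j
    have h1 := hbν j none (bElig_none fS πlow πup μ j)
    have h2 := lex_fst_le h1
    dsimp only
    match hw : ν j with
    | none => simp [hw]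
    | some z =>
      rw [hw] at h2
      simp only [hw, Option.elim_some]
      simpa [bKey, bkc] using h2
  · -- stability
    intro i j c hc1 hc2
    by_contra hcon
    push_neg at hcon
    obtain ⟨hq, hr⟩ := hcon
    have hmem : (j, c) ∈ CsF πlow πup i := (mem_CsF πlow πup i j c).mpr ⟨hc1, hc2⟩
    have hrval : (ofLex (bKey fB πlow πup j (ν j))).1 = (ν j).elim 0 (fun z => fB z.1.1 j (-z.1.2)) := by
      match hw : ν j with
      | none => simp [hw, bKey]
      | some z => simp [hw, bKey, bkc]
    have helig : sElig fB πlow πup ν i (some ⟨(j, c), hmem⟩) := by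
      intro y hy hyx
      have hy2 : y = (j, c) := congrArg Subtype.val ((Option.some.injEq _ _).mp hyx.symm)
      subst hy2
      refine lex_le_of_fst_lt ?_
      rw [hrval]
      exact hr
    have hle := hbμ i _ helig
    have hfst := lex_fst_le hle
    have hqval : (ofLex (sKey fS πlow πup i (μ i))).1 = (μ i).elim 0 (fun z => fS i z.1.1 z.1.2) := by
      match hm : μ i with
      | none => simp [hm, sKey]
      | some z => simp [hm, sKey, skc]
    rw [hqval] at hfst
    have : (ofLex (sKey fS πlow πup i (some ⟨(j, c), hmem⟩))).1 = fS i j c := by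
      simp [sKey, skc]
    rw [this] at hfst
    exact absurd hfst (not_le.mpr hq)

end

end Stmt12Aux

/-- main existence result: every instance of the discrete buyer–seller
model with strictly increasing valuations admits a pairwise-stable outcome
`(X; p, q, r)`. -/
theorem stmt_12 {U V : Type*} [Fintype U] [Fintype V]
    (fS fB : U → V → ℤ → ℝ)
    (hfS : ∀ i j, StrictMono (fS i j)) (hfB : ∀ i j, StrictMono (fB i j))
    (πlow πup : U → V → ℤ) (hπ : ∀ i j, πlow i j ≤ πup i j) :
    ∃ (X : Finset (U × V)) (p : U → V → ℤ) (q : U → ℝ) (r : V → ℝ),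
      -- `X` is a matching:
      (∀ i j j', (i, j) ∈ X → (i, j') ∈ X → j = j') ∧
      (∀ i i' j, (i, j) ∈ X → (i', j) ∈ X → i = i') ∧
      -- the price vector is feasible on `X`:
      (∀ i j, (i, j) ∈ X → πlow i j ≤ p i j ∧ p i j ≤ πup i j) ∧
      -- definition of the payoffs `q` and `r`:
      (∀ i j, (i, j) ∈ X → q i = fS i j (p i j)) ∧
      (∀ i, (∀ j, (i, j) ∉ X) → q i = 0) ∧
      (∀ i j, (i, j) ∈ X → r j = fB i j (-(p i j))) ∧
      (∀ j, (∀ i, (i, j) ∉ X) → r j = 0) ∧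
      -- (p1): individual rationality:
      (∀ i, 0 ≤ q i) ∧ (∀ j, 0 ≤ r j) ∧
      -- (p2): no blocking pair at any feasible integer price:
      (∀ i j, ∀ c : ℤ, πlow i j ≤ c → c ≤ πup i j →
        fS i j c ≤ q i ∨ fB i j (-c) ≤ r j) := by
  letI : LinearOrder U := LinearOrder.lift' (Fintype.equivFin U) (Fintype.equivFin U).injective
  letI : LinearOrder V := LinearOrder.lift' (Fintype.equivFin V) (Fintype.equivFin V).injective
  exact Stmt12Aux.main fS fB πlow πup
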